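/- Let m, n ≥ 3. Any two maximal 312-avoiding m×n (0,1)-matrices contain the same number of 1's. -/
import Mathlib


/-- Number of 1's of an `m × n` (0,1)-matrix `A` (1-indexed entries). -/
def onesCount (m n : ℕ) (A : ℕ → ℕ → Bool) : ℕ :=
  (((Finset.Icc 1 m) ×ˢ (Finset.Icc 1 n)).filter fun p => A p.1 p.2 = true).card

/-- `A` is 312-avoiding. -/
def Avoid312 (m n : ℕ) (A : ℕ → ℕ → Bool) : Prop :=
  ¬ ∃ r₁ r₂ r₃ c₁ c₂ c₃ : ℕ,
    1 ≤ r₁ ∧ r₁ < r₂ ∧ r₂ < r₃ ∧ r₃ ≤ m ∧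
    1 ≤ c₁ ∧ c₁ < c₂ ∧ c₂ < c₃ ∧ c₃ ≤ n ∧
    A r₁ c₃ = true ∧ A r₂ c₁ = true ∧ A r₃ c₂ = true

/-- The matrix obtained from `A` by changing the entry in position `(i, j)` to `1`. -/
def setOne (A : ℕ → ℕ → Bool) (i j : ℕ) : ℕ → ℕ → Bool :=
  fun i' j' => if i' = i ∧ j' = j then true else A i' j'

/-- `A` is maximal 312-avoiding. -/
def MaximalAvoid312 (m n : ℕ) (A : ℕ → ℕ → Bool) : Prop :=
  Avoid312 m n A ∧
    ∀ i j : ℕ, 1 ≤ i → i ≤ m → 1 ≤ j → j ≤ n → A i j = false →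
      ¬ Avoid312 m n (setOne A i j)

lemma setOne_true {A : ℕ → ℕ → Bool} {i j r c : ℕ} :
    setOne A i j r c = true ↔ (r = i ∧ c = j) ∨ A r c = true := by
  unfold setOne; split_ifs with h <;> simp [h]
lemma justified {m n : ℕ} {A : ℕ → ℕ → Bool} (hA : MaximalAvoid312 m n A)
    {i j : ℕ} (h1 : 1 ≤ i) (h2 : i ≤ m) (h3 : 1 ≤ j) (h4 : j ≤ n) (hz : A i j = false) :
    ∃ r1 r2 r3 c1 c2 c3, 1 ≤ r1 ∧ r1 < r2 ∧ r2 < r3 ∧ r3 ≤ m ∧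
      1 ≤ c1 ∧ c1 < c2 ∧ c2 < c3 ∧ c3 ≤ n ∧
      ((r1 = i ∧ c3 = j) ∨ A r1 c3 = true) ∧
      ((r2 = i ∧ c1 = j) ∨ A r2 c1 = true) ∧
      ((r3 = i ∧ c2 = j) ∨ A r3 c2 = true) := by
  have h := hA.2 i j h1 h2 h3 h4 hz
  rw [Avoid312] at h
  obtain ⟨r1, r2, r3, c1, c2, c3, a1, a2, a3, a4, a5, a6, a7, a8, e1, e2, e3⟩ := not_not.mp h
  exact ⟨r1, r2, r3, c1, c2, c3, a1, a2, a3, a4, a5, a6, a7, a8,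
    setOne_true.mp e1, setOne_true.mp e2, setOne_true.mp e3⟩

lemma avoid_apply {m n : ℕ} {A : ℕ → ℕ → Bool} (hA : Avoid312 m n A) {r1 r2 r3 c1 c2 c3 : ℕ}
    (b1 : 1 ≤ r1) (b2 : r1 < r2) (b3 : r2 < r3) (b4 : r3 ≤ m)
    (b5 : 1 ≤ c1) (b6 : c1 < c2) (b7 : c2 < c3) (b8 : c3 ≤ n)
    (e1 : A r1 c3 = true) (e2 : A r2 c1 = true) (e3 : A r3 c2 = true) : False :=
  hA ⟨r1, r2, r3, c1, c2, c3, b1, b2, b3, b4, b5, b6, b7, b8, e1, e2, e3⟩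

lemma forced_11 {m n : ℕ} {A : ℕ → ℕ → Bool} (hA : MaximalAvoid312 m n A)
    (hm : 1 ≤ m) (hn : 1 ≤ n) : A 1 1 = true := by
  by_contra h
  have hz : A 1 1 = false := by simpa using h
  obtain ⟨r1, r2, r3, c1, c2, c3, a1, a2, a3, a4, a5, a6, a7, a8, e1, e2, e3⟩ :=
    justified hA le_rfl hm le_rfl hn hz
  have E1 : A r1 c3 = true := by
    rcases e1 with ⟨h1, h2⟩ | h
    · exfalso; omega
    · exact h
  have E2 : A r2 c1 = true := by
    rcases e2 with ⟨h1, h2⟩ | h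
    · exfalso; omega
    · exact h
  have E3 : A r3 c2 = true := by
    rcases e3 with ⟨h1, h2⟩ | h
    · exfalso; omega
    · exact h
  exact avoid_apply hA.1 a1 a2 a3 a4 a5 a6 a7 a8 E1 E2 E3

lemma forced_12 {m n : ℕ} {A : ℕ → ℕ → Bool} (hA : MaximalAvoid312 m n A)
    (hm : 1 ≤ m) (hn : 2 ≤ n) : A 1 2 = true := by
  by_contra h
  have hz : A 1 2 = false := by simpa using h
  obtain ⟨r1, r2, r3, c1, c2, c3, a1, a2, a3, a4, a5, a6, a7, a8, e1, e2, e3⟩ :=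
    justified hA le_rfl hm (by omega) hn hz
  have E1 : A r1 c3 = true := by
    rcases e1 with ⟨h1, h2⟩ | h
    · exfalso; omega
    · exact h
  have E2 : A r2 c1 = true := by
    rcases e2 with ⟨h1, h2⟩ | h
    · exfalso; omega
    · exact h
  have E3 : A r3 c2 = true := by
    rcases e3 with ⟨h1, h2⟩ | h
    · exfalso; omega
    · exact h
  exact avoid_apply hA.1 a1 a2 a3 a4 a5 a6 a7 a8 E1 E2 E3

lemma forced_m1 {m n : ℕ} {A : ℕ → ℕ → Bool} (hA : MaximalAvoid312 m n A)
    (hm : 1 ≤ m) (hn : 1 ≤ n) : A m 1 = true := by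
  by_contra h
  have hz : A m 1 = false := by simpa using h
  obtain ⟨r1, r2, r3, c1, c2, c3, a1, a2, a3, a4, a5, a6, a7, a8, e1, e2, e3⟩ :=
    justified hA hm le_rfl le_rfl hn hz
  have E1 : A r1 c3 = true := by
    rcases e1 with ⟨h1, h2⟩ | h
    · exfalso; omega
    · exact h
  have E2 : A r2 c1 = true := by
    rcases e2 with ⟨h1, h2⟩ | h
    · exfalso; omega
    · exact h
  have E3 : A r3 c2 = true := by
    rcases e3 with ⟨h1, h2⟩ | h
    · exfalso; omega
    · exact h
  exact avoid_apply hA.1 a1 a2 a3 a4 a5 a6 a7 a8 E1 E2 E3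

/-- If `A 1 3 = false` then the whole of row 1 from column 3 on is zero. -/
lemma row1_zero {m n : ℕ} {A : ℕ → ℕ → Bool} (hA : MaximalAvoid312 m n A)
    (hm : 3 ≤ m) (hn : 3 ≤ n) (h13 : A 1 3 = false) :
    ∀ c, 3 ≤ c → c ≤ n → A 1 c = false := by
  intro c hc1 hc2
  by_contra h
  have hc : A 1 c = true := by simpa using h
  obtain ⟨r1, r2, r3, c1, c2, c3, a1, a2, a3, a4, a5, a6, a7, a8, e1, e2, e3⟩ :=
    justified hA le_rfl (by omega) (by omega) hn h13
  have E2 : A r2 c1 = true := by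
    rcases e2 with ⟨h1, h2⟩ | h'
    · exfalso; omega
    · exact h'
  have E3 : A r3 c2 = true := by
    rcases e3 with ⟨h1, h2⟩ | h'
    · exfalso; omega
    · exact h'
  rcases e1 with ⟨h1, h2⟩ | h'
  · -- r1 = 1, c3 = 3, so c1 = 1, c2 = 2
    have hc1' : c1 = 1 := by omega
    have hc2' : c2 = 2 := by omega
    subst h1 h2 hc1' hc2'
    exact avoid_apply hA.1 a1 a2 a3 a4 (le_refl 1) (by omega) (by omega : 2 < c) hc2 hc E2 E3
  · exact avoid_apply hA.1 a1 a2 a3 a4 a5 a6 a7 a8 h' E2 E3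

/-- With `A 1 3 = true`, columns 1–2 below row 1 form an antichain. -/
lemma antichain {m n : ℕ} {A : ℕ → ℕ → Bool} (hA : MaximalAvoid312 m n A)
    (hn : 3 ≤ n) (h13 : A 1 3 = true) :
    ∀ a a', 2 ≤ a → a < a' → a' ≤ m → A a 1 = true → A a' 2 = true → False := by
  intro a a' b1 b2 b3 e1 e2
  exact avoid_apply hA.1 (le_refl 1) (by omega : 1 < a) b2 b3
    (le_refl 1) (by omega) (by omega) hn h13 e1 e2

lemma onesCount_eq_sum (m n : ℕ) (A : ℕ → ℕ → Bool) :
    onesCount m n A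
      = ∑ i ∈ Finset.Icc 1 m, ∑ j ∈ Finset.Icc 1 n, (if A i j = true then 1 else 0) := by
  rw [onesCount, Finset.card_filter, Finset.sum_product]

lemma Icc_shift (a b : ℕ) :
    Finset.Icc (a+1) (b+1)
      = (Finset.Icc a b).map ⟨fun i => i + 1, fun x y h => Nat.succ_injective h⟩ := by
  ext x
  simp only [Finset.mem_Icc, Finset.mem_map, Function.Embedding.coeFn_mk]
  constructor
  · intro h
    refine ⟨x - 1, by omega, ?_⟩
    show x - 1 + 1 = x
    omega
  · rintro ⟨y, hy, rfl⟩
    show a + 1 ≤ y + 1 ∧ y + 1 ≤ b + 1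
    omega

lemma sum_Icc_shift (a b : ℕ) (f : ℕ → ℕ) :
    ∑ i ∈ Finset.Icc (a+1) (b+1), f i = ∑ i ∈ Finset.Icc a b, f (i + 1) := by
  rw [Icc_shift, Finset.sum_map]
  rfl

def dropRow (A : ℕ → ℕ → Bool) : ℕ → ℕ → Bool := fun i j => A (i+1) j

lemma rowdel_max {m n : ℕ} {A : ℕ → ℕ → Bool} (hA : MaximalAvoid312 m n A)
    (hm : 3 ≤ m) (hn : 3 ≤ n) (h13 : A 1 3 = false) :
    MaximalAvoid312 (m-1) n (dropRow A) := by
  constructor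
  · rintro ⟨r1, r2, r3, c1, c2, c3, a1, a2, a3, a4, a5, a6, a7, a8, e1, e2, e3⟩
    exact avoid_apply hA.1 (show 1 ≤ r1 + 1 by omega) (show r1 + 1 < r2 + 1 by omega)
      (show r2 + 1 < r3 + 1 by omega) (show r3 + 1 ≤ m by omega) a5 a6 a7 a8 e1 e2 e3
  · intro i j h1 h2 h3 h4 hz hav
    obtain ⟨r1, r2, r3, c1, c2, c3, a1, a2, a3, a4, a5, a6, a7, a8, e1, e2, e3⟩ :=
      justified hA (show 1 ≤ i + 1 by omega) (show i + 1 ≤ m by omega) h3 h4 hz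
    have hr1 : 2 ≤ r1 := by
      by_contra hr
      have hr1' : r1 = 1 := by omega
      subst hr1'
      rcases e1 with ⟨h5, h6⟩ | h5
      · omega
      · have hzero := row1_zero hA hm hn h13 c3 (by omega) a8
        rw [hzero] at h5
        exact Bool.false_ne_true h5
    apply hav
    refine ⟨r1 - 1, r2 - 1, r3 - 1, c1, c2, c3, by omega, by omega, by omega, by omega,
      a5, a6, a7, a8, ?_, ?_, ?_⟩
    · rw [setOne_true]
      rcases e1 with ⟨h5, h6⟩ | h5
      · exact Or.inl ⟨by omega, h6⟩
      · refine Or.inr ?_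
        show A (r1 - 1 + 1) c3 = true
        rwa [show r1 - 1 + 1 = r1 by omega]
    · rw [setOne_true]
      rcases e2 with ⟨h5, h6⟩ | h5
      · exact Or.inl ⟨by omega, h6⟩
      · refine Or.inr ?_
        show A (r2 - 1 + 1) c1 = true
        rwa [show r2 - 1 + 1 = r2 by omega]
    · rw [setOne_true]
      rcases e3 with ⟨h5, h6⟩ | h5
      · exact Or.inl ⟨by omega, h6⟩
      · refine Or.inr ?_
        show A (r3 - 1 + 1) c2 = true
        rwa [show r3 - 1 + 1 = r3 by omega]

lemma rowdel_count {m n : ℕ} {A : ℕ → ℕ → Bool} (hA : MaximalAvoid312 m n A)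
    (hm : 3 ≤ m) (hn : 3 ≤ n) (h13 : A 1 3 = false) :
    onesCount m n A = 2 + onesCount (m-1) n (dropRow A) := by
  rw [onesCount_eq_sum, onesCount_eq_sum]
  have hsplit : Finset.Icc 1 m = insert 1 (Finset.Icc 2 m) := by
    ext x; simp only [Finset.mem_Icc, Finset.mem_insert]; omega
  rw [hsplit, Finset.sum_insert (by simp [Finset.mem_Icc])]
  congr 1
  · -- row 1 contributes 2
    have h1 : Finset.Icc 1 n = insert 1 (insert 2 (Finset.Icc 3 n)) := by
      ext x; simp only [Finset.mem_Icc, Finset.mem_insert]; omega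
    rw [h1, Finset.sum_insert (by simp [Finset.mem_Icc]),
      Finset.sum_insert (by simp [Finset.mem_Icc])]
    rw [forced_11 hA (by omega) (by omega), forced_12 hA (by omega) (by omega)]
    have hrest : ∑ j ∈ Finset.Icc 3 n, (if A 1 j = true then 1 else 0) = 0 := by
      apply Finset.sum_eq_zero
      intro x hx
      simp only [Finset.mem_Icc] at hx
      rw [row1_zero hA hm hn h13 x hx.1 hx.2]
      simp
    rw [hrest]
    simp
  · -- rows 2..m
    have h2 : Finset.Icc 2 m = Finset.Icc (1+1) ((m-1)+1) := by
      congr 1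
      omega
    rw [h2, sum_Icc_shift]
    rfl

def mergeB (A : ℕ → ℕ → Bool) : ℕ → ℕ → Bool :=
  fun i j => if j = 1 then (A i 1 || A i 2) else A i (j+1)

lemma mergeB_one (A : ℕ → ℕ → Bool) (i : ℕ) : mergeB A i 1 = (A i 1 || A i 2) := if_pos rfl

lemma mergeB_ne (A : ℕ → ℕ → Bool) (i : ℕ) {j : ℕ} (h : j ≠ 1) :
    mergeB A i j = A i (j+1) := if_neg h

lemma exists_p {m n : ℕ} {A : ℕ → ℕ → Bool} (hA : MaximalAvoid312 m n A)
    (hm : 3 ≤ m) (hn : 3 ≤ n) (h13 : A 1 3 = true) :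
    ∃ p, 2 ≤ p ∧ p ≤ m ∧ A p 1 = true ∧ A p 2 = true ∧
      ∀ i, 1 ≤ i → i ≤ m → A i 1 = true → A i 2 = true → i = 1 ∨ i = p := by
  set P : Finset ℕ := (Finset.Icc 2 m).filter (fun i => A i 1 = true) with hP
  have hPne : P.Nonempty := by
    refine ⟨m, ?_⟩
    simp only [hP, Finset.mem_filter, Finset.mem_Icc]
    exact ⟨⟨by omega, le_rfl⟩, forced_m1 hA (by omega) (by omega)⟩
  set p := P.min' hPne with hpdef
  have hpP : p ∈ P := Finset.min'_mem P hPne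
  have hmin : ∀ i ∈ P, p ≤ i := fun i hi => Finset.min'_le P i hi
  simp only [hP, Finset.mem_filter, Finset.mem_Icc] at hpP
  obtain ⟨⟨hp2, hpm⟩, hp1⟩ := hpP
  have hp2t : A p 2 = true := by
    by_contra h
    have hz : A p 2 = false := by simpa using h
    obtain ⟨r1, r2, r3, c1, c2, c3, a1, a2, a3, a4, a5, a6, a7, a8, e1, e2, e3⟩ :=
      justified hA (by omega) hpm (by omega) (by omega) hz
    rcases e2 with ⟨hq1, hq2⟩ | E2
    · -- the added cell is the (r₂,c₁) point: r2 = p, c1 = 2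
      have E1 : A r1 c3 = true := by
        rcases e1 with ⟨u1, u2⟩ | E
        · exfalso; omega
        · exact E
      have E3 : A r3 c2 = true := by
        rcases e3 with ⟨u1, u2⟩ | E
        · exfalso; omega
        · exact E
      exact avoid_apply hA.1 a1 (show r1 < p by omega) (show p < r3 by omega) a4
        (le_refl 1) (show 1 < c2 by omega) a7 a8 E1 hp1 E3
    · rcases e3 with ⟨hq1, hq2⟩ | E3
      · -- the added cell is the (r₃,c₂) point: r3 = p, c2 = 2, hence c1 = 1
        have hc1 : c1 = 1 := by omega
        have hr2P : r2 ∈ P := by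
          simp only [hP, Finset.mem_filter, Finset.mem_Icc]
          refine ⟨⟨by omega, by omega⟩, ?_⟩
          rwa [hc1] at E2
        have := hmin r2 hr2P
        omega
      · have E1 : A r1 c3 = true := by
          rcases e1 with ⟨u1, u2⟩ | E
          · exfalso; omega
          · exact E
        exact avoid_apply hA.1 a1 a2 a3 a4 a5 a6 a7 a8 E1 E2 E3
  refine ⟨p, hp2, hpm, hp1, hp2t, ?_⟩
  intro i hi1 hi2 e1 e2
  by_cases h : i = 1
  · exact Or.inl h
  · right
    have h2 : 2 ≤ i := by omega
    rcases lt_trichotomy i p with hlt | heq | hgt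
    · exfalso
      have hiP : i ∈ P := by
        simp only [hP, Finset.mem_filter, Finset.mem_Icc]
        exact ⟨⟨h2, hi2⟩, e1⟩
      have := hmin i hiP
      omega
    · exact heq
    · exact (antichain hA hn h13 p i hp2 hgt hi2 hp1 e2).elim

lemma merge_max {m n : ℕ} {A : ℕ → ℕ → Bool} (hA : MaximalAvoid312 m n A)
    (hm : 3 ≤ m) (hn : 3 ≤ n) (h13 : A 1 3 = true) :
    MaximalAvoid312 m (n-1) (mergeB A) := by
  constructor
  · rintro ⟨r1, r2, r3, c1, c2, c3, a1, a2, a3, a4, a5, a6, a7, a8, e1, e2, e3⟩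
    have hc2 : 2 ≤ c2 := by omega
    have hc3 : 3 ≤ c3 := by omega
    rw [mergeB_ne A r1 (by omega : c3 ≠ 1)] at e1
    rw [mergeB_ne A r3 (by omega : c2 ≠ 1)] at e3
    by_cases hc1 : c1 = 1
    · subst hc1
      rw [mergeB_one] at e2
      rcases Bool.or_eq_true_iff.mp e2 with E | E
      · exact avoid_apply hA.1 a1 a2 a3 a4 (le_refl 1) (show 1 < c2 + 1 by omega)
          (show c2 + 1 < c3 + 1 by omega) (by omega) e1 E e3
      · exact avoid_apply hA.1 a1 a2 a3 a4 (show 1 ≤ 2 by omega) (show 2 < c2 + 1 by omega)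
          (show c2 + 1 < c3 + 1 by omega) (by omega) e1 E e3
    · rw [mergeB_ne A r2 hc1] at e2
      exact avoid_apply hA.1 a1 a2 a3 a4 (by omega) (show c1 + 1 < c2 + 1 by omega)
        (show c2 + 1 < c3 + 1 by omega) (by omega) e1 e2 e3
  · intro i j h1 h2 h3 h4 hz hav
    by_cases hj : j = 1
    · subst hj
      rw [mergeB_one] at hz
      have hz1 : A i 1 = false := (Bool.or_eq_false_iff.mp hz).1
      have hz2 : A i 2 = false := (Bool.or_eq_false_iff.mp hz).2
      have hi2 : 2 ≤ i := by
        by_contra hh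
        have hi1 : i = 1 := by omega
        subst hi1
        simp [forced_11 hA (by omega) (by omega)] at hz1
      obtain ⟨r1, r2, r3, c1, c2, c3, a1, a2, a3, a4, a5, a6, a7, a8, e1, e2, e3⟩ :=
        justified hA h1 h2 (by omega) (by omega : 2 ≤ n) hz2
      have E1 : A r1 c3 = true := by
        rcases e1 with ⟨u, v⟩ | E
        · exfalso; omega
        · exact E
      rcases e2 with ⟨u1, u2⟩ | E2
      · -- added cell (i,2) plays the (r₂,c₁) role: r2 = i, c1 = 2
        have E3 : A r3 c2 = true := by
          rcases e3 with ⟨v1, v2⟩ | E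
          · exfalso; omega
          · exact E
        apply hav
        refine ⟨r1, i, r3, 1, c2 - 1, c3 - 1, a1, by omega, by omega, a4,
          le_rfl, by omega, by omega, by omega, ?_, ?_, ?_⟩
        · rw [setOne_true]
          right
          rw [mergeB_ne A r1 (by omega : c3 - 1 ≠ 1), show c3 - 1 + 1 = c3 by omega]
          exact E1
        · rw [setOne_true]; exact Or.inl ⟨rfl, rfl⟩
        · rw [setOne_true]
          right
          rw [mergeB_ne A r3 (by omega : c2 - 1 ≠ 1), show c2 - 1 + 1 = c2 by omega]
          exact E3
      · rcases e3 with ⟨v1, v2⟩ | E3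
        · -- added cell (i,2) plays the (r₃,c₂) role: r3 = i, c2 = 2, so c1 = 1
          have hc1 : c1 = 1 := by omega
          have H : A r2 1 = true := by rwa [hc1] at E2
          have hr2i : r2 < i := by omega
          have hr22 : 2 ≤ r2 := by omega
          obtain ⟨s1, s2, s3, d1, d2, d3, b1, b2, b3, b4, b5, b6, b7, b8, f1, f2, f3⟩ :=
            justified hA h1 h2 (by omega) (by omega : 1 ≤ n) hz1
          have F1 : A s1 d3 = true := by
            rcases f1 with ⟨u, v⟩ | F
            · exfalso; omega
            · exact F
          have F3 : A s3 d2 = true := by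
            rcases f3 with ⟨u, v⟩ | F
            · exfalso; omega
            · exact F
          rcases f2 with ⟨u, v⟩ | F2
          · -- added cell (i,1) plays the (r₂,c₁) role: s2 = i, d1 = 1
            by_cases hd2 : d2 = 2
            · exact antichain hA hn h13 r2 s3 hr22 (by omega) b4 H (by rwa [hd2] at F3)
            · have hd2' : 3 ≤ d2 := by omega
              apply hav
              refine ⟨s1, i, s3, 1, d2 - 1, d3 - 1, b1, by omega, by omega, b4,
                le_rfl, by omega, by omega, by omega, ?_, ?_, ?_⟩
              · rw [setOne_true]
                right
                rw [mergeB_ne A s1 (by omega : d3 - 1 ≠ 1), show d3 - 1 + 1 = d3 by omega]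
                exact F1
              · rw [setOne_true]; exact Or.inl ⟨rfl, rfl⟩
              · rw [setOne_true]
                right
                rw [mergeB_ne A s3 (by omega : d2 - 1 ≠ 1), show d2 - 1 + 1 = d2 by omega]
                exact F3
          · exact avoid_apply hA.1 b1 b2 b3 b4 b5 b6 b7 b8 F1 F2 F3
        · exact avoid_apply hA.1 a1 a2 a3 a4 a5 a6 a7 a8 E1 E2 E3
    · -- j ≥ 2
      have hj2 : 2 ≤ j := by omega
      have hzA : A i (j+1) = false := by rwa [mergeB_ne A i hj] at hz
      obtain ⟨r1, r2, r3, c1, c2, c3, a1, a2, a3, a4, a5, a6, a7, a8, e1, e2, e3⟩ :=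
        justified hA h1 h2 (by omega) (by omega : j + 1 ≤ n) hzA
      have hnc : ¬(c1 = 1 ∧ c2 = 2) := by
        rintro ⟨hq1, hq2⟩
        have E2 : A r2 c1 = true := by
          rcases e2 with ⟨u, v⟩ | E
          · exfalso; omega
          · exact E
        have E3 : A r3 c2 = true := by
          rcases e3 with ⟨u, v⟩ | E
          · exfalso; omega
          · exact E
        exact antichain hA hn h13 r2 r3 (by omega) a3 a4 (by rwa [hq1] at E2)
          (by rwa [hq2] at E3)
      have hc2 : 3 ≤ c2 := by
        by_contra hh
        have h22 : c2 = 2 := by omega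
        exact hnc ⟨by omega, h22⟩
      apply hav
      by_cases hc1 : c1 ≤ 2
      · refine ⟨r1, r2, r3, 1, c2 - 1, c3 - 1, a1, a2, a3, a4,
          le_rfl, by omega, by omega, by omega, ?_, ?_, ?_⟩
        · rw [setOne_true]
          rcases e1 with ⟨u, v⟩ | E
          · exact Or.inl ⟨u, by omega⟩
          · right
            rw [mergeB_ne A r1 (by omega : c3 - 1 ≠ 1), show c3 - 1 + 1 = c3 by omega]
            exact E
        · rw [setOne_true]
          rcases e2 with ⟨u, v⟩ | E
          · exfalso; omega
          · right
            rw [mergeB_one]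
            rcases (by omega : c1 = 1 ∨ c1 = 2) with rfl | rfl
            · simp [E]
            · simp [E]
        · rw [setOne_true]
          rcases e3 with ⟨u, v⟩ | E
          · exact Or.inl ⟨u, by omega⟩
          · right
            rw [mergeB_ne A r3 (by omega : c2 - 1 ≠ 1), show c2 - 1 + 1 = c2 by omega]
            exact E
      · refine ⟨r1, r2, r3, c1 - 1, c2 - 1, c3 - 1, a1, a2, a3, a4,
          by omega, by omega, by omega, by omega, ?_, ?_, ?_⟩
        · rw [setOne_true]
          rcases e1 with ⟨u, v⟩ | E
          · exact Or.inl ⟨u, by omega⟩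
          · right
            rw [mergeB_ne A r1 (by omega : c3 - 1 ≠ 1), show c3 - 1 + 1 = c3 by omega]
            exact E
        · rw [setOne_true]
          rcases e2 with ⟨u, v⟩ | E
          · exact Or.inl ⟨u, by omega⟩
          · right
            rw [mergeB_ne A r2 (by omega : c1 - 1 ≠ 1), show c1 - 1 + 1 = c1 by omega]
            exact E
        · rw [setOne_true]
          rcases e3 with ⟨u, v⟩ | E
          · exact Or.inl ⟨u, by omega⟩
          · right
            rw [mergeB_ne A r3 (by omega : c2 - 1 ≠ 1), show c2 - 1 + 1 = c2 by omega]
            exact E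

lemma merge_count {m n : ℕ} {A : ℕ → ℕ → Bool} (hA : MaximalAvoid312 m n A)
    (hm : 3 ≤ m) (hn : 3 ≤ n) (h13 : A 1 3 = true) :
    onesCount m n A = onesCount m (n-1) (mergeB A) + 2 := by
  obtain ⟨p, hp2, hpm, hp1, hp2t, huniq⟩ := exists_p hA hm hn h13
  rw [onesCount_eq_sum, onesCount_eq_sum]
  have hrow : ∀ i ∈ Finset.Icc 1 m,
      ∑ j ∈ Finset.Icc 1 n, (if A i j = true then 1 else 0)
        = (∑ j ∈ Finset.Icc 1 (n-1), (if mergeB A i j = true then 1 else 0))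
          + (if A i 1 = true ∧ A i 2 = true then 1 else 0) := by
    intro i _
    have hL : Finset.Icc 1 n = insert 1 (insert 2 (Finset.Icc 3 n)) := by
      ext x; simp only [Finset.mem_Icc, Finset.mem_insert]; omega
    have hR : Finset.Icc 1 (n-1) = insert 1 (Finset.Icc 2 (n-1)) := by
      ext x; simp only [Finset.mem_Icc, Finset.mem_insert]; omega
    rw [hL, hR, Finset.sum_insert (by simp [Finset.mem_Icc]),
      Finset.sum_insert (by simp [Finset.mem_Icc]),
      Finset.sum_insert (by simp [Finset.mem_Icc])]
    have hmid : ∑ j ∈ Finset.Icc 2 (n-1), (if mergeB A i j = true then 1 else 0)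
        = ∑ j ∈ Finset.Icc 3 n, (if A i j = true then 1 else 0) := by
      have h3n : Finset.Icc 3 n = Finset.Icc (2+1) ((n-1)+1) := by congr 1; omega
      rw [h3n, sum_Icc_shift]
      apply Finset.sum_congr rfl
      intro j hj
      simp only [Finset.mem_Icc] at hj
      rw [mergeB_ne A i (by omega : j ≠ 1)]
    rw [hmid, mergeB_one]
    cases h1 : A i 1 <;> cases h2 : A i 2 <;> simp [h1, h2] <;> omega
  rw [Finset.sum_congr rfl hrow, Finset.sum_add_distrib]
  congr 1
  rw [← Finset.card_filter]
  have hfil : (Finset.Icc 1 m).filter (fun i => A i 1 = true ∧ A i 2 = true) = {1, p} := by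
    ext x
    simp only [Finset.mem_filter, Finset.mem_Icc, Finset.mem_insert, Finset.mem_singleton]
    constructor
    · rintro ⟨⟨hx1, hx2⟩, e1, e2⟩
      exact huniq x hx1 hx2 e1 e2
    · rintro (rfl | rfl)
      · exact ⟨⟨le_rfl, by omega⟩, forced_11 hA (by omega) (by omega),
          forced_12 hA (by omega) (by omega)⟩
      · exact ⟨⟨by omega, hpm⟩, hp1, hp2t⟩
  rw [hfil, Finset.card_insert_of_notMem (by simp; omega), Finset.card_singleton]

lemma base_count {m n : ℕ} {A : ℕ → ℕ → Bool} (hA : MaximalAvoid312 m n A)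
    (hm : 2 ≤ m) (hn : 2 ≤ n) (hd : m = 2 ∨ n = 2) :
    onesCount m n A = 2 * m + 2 * n - 4 := by
  have hall : ∀ i j, 1 ≤ i → i ≤ m → 1 ≤ j → j ≤ n → A i j = true := by
    intro i j h1 h2 h3 h4
    by_contra h
    have hz : A i j = false := by simpa using h
    apply hA.2 i j h1 h2 h3 h4 hz
    rintro ⟨r1, r2, r3, c1, c2, c3, a1, a2, a3, a4, a5, a6, a7, a8, _, _, _⟩
    rcases hd with rfl | rfl <;> omega
  rw [onesCount_eq_sum]
  have hrow : ∀ i ∈ Finset.Icc 1 m,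
      ∑ j ∈ Finset.Icc 1 n, (if A i j = true then 1 else 0) = n := by
    intro i hi
    simp only [Finset.mem_Icc] at hi
    have : ∀ j ∈ Finset.Icc 1 n, (if A i j = true then 1 else 0) = 1 := by
      intro j hj
      simp only [Finset.mem_Icc] at hj
      rw [hall i j hi.1 hi.2 hj.1 hj.2]
      simp
    rw [Finset.sum_congr rfl this, Finset.sum_const, smul_eq_mul, mul_one, Nat.card_Icc]
    omega
  rw [Finset.sum_congr rfl hrow, Finset.sum_const, smul_eq_mul, Nat.card_Icc]
  rcases hd with rfl | rfl <;> omega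

lemma key_count : ∀ N m n (A : ℕ → ℕ → Bool), m + n ≤ N → 2 ≤ m → 2 ≤ n →
    MaximalAvoid312 m n A → onesCount m n A = 2 * m + 2 * n - 4 := by
  intro N
  induction N with
  | zero => intro m n A h hm hn _; omega
  | succ N ih =>
    intro m n A hN hm hn hA
    by_cases hm3 : 3 ≤ m
    · by_cases hn3 : 3 ≤ n
      · by_cases h13 : A 1 3 = true
        · have hmax := merge_max hA hm3 hn3 h13
          have hcnt := merge_count hA hm3 hn3 h13
          have hih := ih m (n-1) (mergeB A) (by omega) hm (by omega) hmax
          omega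
        · have h13' : A 1 3 = false := by simpa using h13
          have hmax := rowdel_max hA hm3 hn3 h13'
          have hcnt := rowdel_count hA hm3 hn3 h13'
          have hih := ih (m-1) n (dropRow A) (by omega) (by omega) hn hmax
          omega
      · exact base_count hA hm hn (Or.inr (by omega))
    · exact base_count hA hm hn (Or.inl (by omega))

theorem stmt_16 (m n : ℕ) (hm : 3 ≤ m) (hn : 3 ≤ n) (A B : ℕ → ℕ → Bool)
    (hA : MaximalAvoid312 m n A) (hB : MaximalAvoid312 m n B) :
    onesCount m n A = onesCount m n B := by
  rw [key_count (m+n) m n A le_rfl (by omega) (by omega) hA,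
    key_count (m+n) m n B le_rfl (by omega) (by omega) hB]
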